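/- Let D₁ and D₂ be finite abelian groups equipped with quadratic forms q₁ : D₁ → ℚ/ℤ and q₂ : D₂ → ℚ/ℤ, of coprime orders, and let D = D₁ × D₂ with q(x,y) = q₁(x) + q₂(y). Suppose the levels N₁ of (D₁,q₁) and N₂ of (D₂,q₂) are coprime, and set N = N₁N₂. Then for any integer n, q represents n/N (mod ℤ) if and only if q₁ represents N₂·n/N₁ (mod ℤ) and q₂ represents N₁·n/N₂ (mod ℤ). -/

import Mathlib

lemma aux_coe_eq_of_sub_int (a b : ℚ) (k : ℤ) (h : a - b = k) :
    (a : AddCircle (1 : ℚ)) = (b : AddCircle (1 : ℚ)) := by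
  have : a = b + (k : ℚ) := by linarith [h]
  rw [this, AddCircle.coe_add]
  have hz : ((k : ℚ) : AddCircle (1 : ℚ)) = 0 := by
    rw [AddCircle.coe_eq_zero_iff]
    exact ⟨k, by simp⟩
  rw [hz, add_zero]

/-- For finite quadratic modules `(D₁,q₁)`, `(D₂,q₂)` of coprime orders and coprime
levels `N₁, N₂`, with `N = N₁N₂`, the orthogonal direct sum `q(x,y) = q₁ x + q₂ y`
represents `n/N (mod ℤ)` if and only if `q₁` represents `N₂·n/N₁ (mod ℤ)` and `q₂`
represents `N₁·n/N₂ (mod ℤ)`. -/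
theorem stmt_5 (D₁ D₂ : Type) [AddCommGroup D₁] [AddCommGroup D₂] [Fintype D₁] [Fintype D₂]
    (q₁ : D₁ → AddCircle (1 : ℚ)) (q₂ : D₂ → AddCircle (1 : ℚ))
    (hq₁ : ∀ (m : ℤ) (γ : D₁), q₁ (m • γ) = (m ^ 2) • q₁ γ)
    (hq₂ : ∀ (m : ℤ) (γ : D₂), q₂ (m • γ) = (m ^ 2) • q₂ γ)
    (hcardcop : Nat.Coprime (Fintype.card D₁) (Fintype.card D₂))
    (N₁ N₂ : ℕ)
    (hN₁ : IsLeast {k : ℕ | 0 < k ∧ ∀ γ : D₁, (k : ℤ) • q₁ γ = 0} N₁)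
    (hN₂ : IsLeast {k : ℕ | 0 < k ∧ ∀ γ : D₂, (k : ℤ) • q₂ γ = 0} N₂)
    (hcop : Nat.Coprime N₁ N₂)
    (n : ℤ) :
    (∃ γ : D₁ × D₂, q₁ γ.1 + q₂ γ.2 = ((n : ℚ) / (N₁ * N₂ : ℕ) : ℚ)) ↔
      ((∃ γ₁ : D₁, q₁ γ₁ = (((N₂ : ℚ) * n) / (N₁ : ℕ) : ℚ)) ∧
        (∃ γ₂ : D₂, q₂ γ₂ = (((N₁ : ℚ) * n) / (N₂ : ℕ) : ℚ))) := by
  obtain ⟨⟨hN₁pos, hann₁⟩, _⟩ := hN₁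
  obtain ⟨⟨hN₂pos, hann₂⟩, _⟩ := hN₂
  have hN₁Q : (N₁ : ℚ) ≠ 0 := Nat.cast_ne_zero.2 hN₁pos.ne'
  have hN₂Q : (N₂ : ℚ) ≠ 0 := Nat.cast_ne_zero.2 hN₂pos.ne'
  constructor
  · rintro ⟨⟨x, y⟩, hxy⟩
    simp only at hxy
    constructor
    · refine ⟨(N₂ : ℤ) • x, ?_⟩
      have h1 : (N₂ : ℤ) • (q₁ x + q₂ y) = (N₂ : ℤ) • q₁ x := by
        rw [smul_add, hann₂ y, add_zero]
      have h2 : (N₂ : ℤ) • q₁ x = (((n : ℚ) / N₁ : ℚ) : AddCircle (1:ℚ)) := by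
        rw [← h1, hxy, ← AddCircle.coe_zsmul]
        congr 1
        push_cast
        field_simp
        rw [zsmul_eq_mul]; push_cast; field_simp
      rw [hq₁, sq, mul_smul, h2, ← AddCircle.coe_zsmul]
      congr 1
      push_cast
      field_simp; simp only [zsmul_eq_mul]; push_cast; field_simp
    · refine ⟨(N₁ : ℤ) • y, ?_⟩
      have h1 : (N₁ : ℤ) • (q₁ x + q₂ y) = (N₁ : ℤ) • q₂ y := by
        rw [smul_add, hann₁ x, zero_add]
      have h2 : (N₁ : ℤ) • q₂ y = (((n : ℚ) / N₂ : ℚ) : AddCircle (1:ℚ)) := by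
        rw [← h1, hxy, ← AddCircle.coe_zsmul]
        congr 1
        push_cast
        field_simp
        rw [zsmul_eq_mul]; push_cast; field_simp
      rw [hq₂, sq, mul_smul, h2, ← AddCircle.coe_zsmul]
      congr 1
      push_cast
      field_simp; simp only [zsmul_eq_mul]; push_cast; field_simp
  · rintro ⟨⟨γ₁, h1⟩, ⟨γ₂, h2⟩⟩
    have hcopZ : IsCoprime (N₁ : ℤ) (N₂ : ℤ) := by
      rw [Int.isCoprime_iff_gcd_eq_one]
      exact_mod_cast hcop
    obtain ⟨u, v, huv⟩ := hcopZ
    refine ⟨(v • γ₁, u • γ₂), ?_⟩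
    simp only
    rw [hq₁, hq₂, h1, h2, ← AddCircle.coe_zsmul, ← AddCircle.coe_zsmul,
      ← AddCircle.coe_add]
    apply aux_coe_eq_of_sub_int _ _ (-(2 * u * v * n))
    have hval : (v^2 : ℚ) * ((N₂ : ℚ) * n / N₁) + (u^2 : ℚ) * ((N₁ : ℚ) * n / N₂)
        - (n : ℚ) / (N₁ * N₂) = ((v^2 * N₂^2 + u^2 * N₁^2 - 1 : ℚ) * n) / (N₁ * N₂) := by
      field_simp
    have hkey : (v^2 * N₂^2 + u^2 * N₁^2 - 1 : ℚ) = -(2*u*v) * (N₁ * N₂) := by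
      have : (u : ℚ) * N₁ + v * N₂ = 1 := by exact_mod_cast huv
      nlinarith [this]
    push_cast
    rw [zsmul_eq_mul, zsmul_eq_mul] at *
    push_cast
    rw [hval, hkey]
    field_simp
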